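/- Let A_1, …, A_m be a finite measurable partition of M into pairwise disjoint sets, and suppose that for each j there is a constant d_j ∈ ℝ^n with d(X, τ) = d_j for all X ∈ S(A_j). Then for all k ∈ ℝ^n and t ∈ ℝ, Z_M(k, t+τ) = ∑_{j=1}^m e^{i⟨k, d_j⟩} Z_{A_j}(k, t). (This is the exact finite-time form of the sum rule Eq. (23d) of the paper, ν(M) e^{s_k τ} = ∑_j e^{i k·d_j} χ_k(A_j).) -/

import Mathlib

open MeasureTheory

/-- `Z_A(k,t) = ∫_A exp(i⟨k, d(X,t)⟩) dν(X)`. -/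
noncomputable def Zfun {M : Type*} [MeasurableSpace M] (ν : Measure M)
    {n : ℕ} (d : M → ℝ → Fin n → ℝ) (A : Set M) (k : Fin n → ℝ) (t : ℝ) : ℂ :=
  ∫ X in A, Complex.exp (Complex.I * ((∑ a, k a * d X t a : ℝ) : ℂ)) ∂ν

/-- exact finite-time form of the sum rule Eq. (23d):
if `d(·,τ)` is constant equal to `d_j` on each image `S(A_j)` of a finite
measurable partition of `M`, then
`Z_M(k, t+τ) = ∑_j e^{i⟨k, d_j⟩} Z_{A_j}(k, t)`. -/
theorem sum_rule_Z {M : Type*} [MeasurableSpace M]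
    (ν : Measure M) [IsFiniteMeasure ν] (hν : 0 < ν Set.univ)
    {n : ℕ} (hn : 1 ≤ n) (d : M → ℝ → Fin n → ℝ)
    (hdmeas : ∀ s : ℝ, Measurable fun X => d X s)
    (hdbd : ∀ s : ℝ, ∃ C : ℝ, ∀ X : M, ‖d X s‖ ≤ C)
    (S : M ≃ M) (hS : MeasurePreserving S ν ν) (hS' : MeasurePreserving S.symm ν ν)
    (τ : ℝ)
    (hcocycle : ∀ (X : M) (t : ℝ), d X (t + τ) = d X τ + d (S.symm X) t)
    (m : ℕ) (A : Fin m → Set M)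
    (hAmeas : ∀ j, MeasurableSet (A j))
    (hAdisj : ∀ i j, i ≠ j → Disjoint (A i) (A j))
    (hAcover : (⋃ j, A j) = Set.univ)
    (dj : Fin m → Fin n → ℝ)
    (hdj : ∀ j, ∀ X ∈ S '' A j, d X τ = dj j) :
    ∀ (k : Fin n → ℝ) (t : ℝ),
      Zfun ν d Set.univ k (t + τ)
        = ∑ j, Complex.exp (Complex.I * ((∑ a, k a * dj j a : ℝ) : ℂ))
            * Zfun ν d (A j) k t := by
  intro k t
  -- S as a measurable equiv
  let Se : M ≃ᵐ M := ⟨S, hS.measurable, hS'.measurable⟩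
  have hemb : MeasurableEmbedding S := Se.measurableEmbedding
  -- the integrand for time t+τ
  set f : M → ℂ := fun X => Complex.exp (Complex.I * ((∑ a, k a * d X (t + τ) a : ℝ) : ℂ)) with hf
  have hfmeas : Measurable f := by
    apply Complex.measurable_exp.comp
    apply Measurable.const_mul
    apply Complex.measurable_ofReal.comp
    exact Finset.measurable_sum _ fun a _ =>
      ((measurable_pi_apply a).comp (hdmeas (t + τ))).const_mul (k a)
  have hfbd : ∀ X, ‖f X‖ ≤ 1 := by
    intro X
    rw [hf]
    simp [mul_comm Complex.I, Complex.norm_exp]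
  have hfint : ∀ (s : Set M), IntegrableOn f s ν := by
    intro s
    apply Integrable.integrableOn
    exact (integrable_const (1 : ℝ)).mono' hfmeas.aestronglyMeasurable
      (Filter.Eventually.of_forall hfbd)
  -- covering by images
  have hcover' : (⋃ j, S '' A j) = Set.univ := by
    rw [← Set.image_iUnion, hAcover, Set.image_univ, S.surjective.range_eq]
  have hSmeas : ∀ j, MeasurableSet (S '' A j) := fun j => hemb.measurableSet_image' (hAmeas j)
  have hSdisj : Pairwise (Function.onFun Disjoint fun j => S '' A j) := by
    intro i j hij
    exact (Set.disjoint_image_iff S.injective).mpr (hAdisj i j hij)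
  have h1 : Zfun ν d Set.univ k (t + τ) = ∑ j, ∫ X in S '' A j, f X ∂ν := by
    rw [Zfun, ← hcover']
    exact integral_iUnion_fintype hSmeas hSdisj fun j => hfint _
  rw [h1]
  congr 1
  ext j
  have h2 : ∫ X in S '' A j, f X ∂ν
      = ∫ X in S '' A j, Complex.exp (Complex.I * ((∑ a, k a * dj j a : ℝ) : ℂ))
          * Complex.exp (Complex.I * ((∑ a, k a * d (S.symm X) t a : ℝ) : ℂ)) ∂ν := by
    apply setIntegral_congr_fun (hSmeas j)
    intro X hX
    rw [hf]
    simp only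
    rw [← Complex.exp_add, ← mul_add, ← Complex.ofReal_add, ← Finset.sum_add_distrib]
    congr 3
    apply Finset.sum_congr rfl
    intro a _
    rw [hcocycle X t, hdj j X hX]
    simp [Pi.add_apply, mul_add]
  rw [h2, integral_const_mul]
  congr 1
  have h3 := hS.setIntegral_image_emb hemb
    (fun X => Complex.exp (Complex.I * ((∑ a, k a * d (S.symm X) t a : ℝ) : ℂ))) (A j)
  simp only [Equiv.symm_apply_apply] at h3
  rw [Zfun, h3]
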